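/- Let (x*, y*) ∈ (0,1)^4 × (0,1) satisfy x^st(x*, y*) = x^o and y* = y^o, and let J be the 5×5 Jacobian matrix of the gradient-ascent vector field F at (x*, y*), J_{ij} := ∂F_i/∂z_j evaluated at (x*,y*) with z = (x1,x2,x3,x4,y). Then J_{ij} = 0 for all 1 ≤ i,j ≤ 4; J_{i5} = x_i*·(1−x_i*)·(u1−u2−u3+u4)·∂x^st/∂x_i|_(x*,y*) > 0 for i = 1,...,4; J_{5j} = −y*·(1−y*)·(u1−u2−u3+u4)·∂x^st/∂x_j|_(x*,y*) < 0 for j = 1,...,4; and J_{55} = −2·y*·(1−y*)·(u1−u2−u3+u4)·∂x^st/∂y|_(x*,y*). -/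

import Mathlib

/-- Δ(x,y) := x̃1·y + x̃2·ỹ + x3·y + x4·ỹ -/
noncomputable def Del (x1 x2 x3 x4 y : ℝ) : ℝ :=
  (1 - x1) * y + (1 - x2) * (1 - y) + x3 * y + x4 * (1 - y)

/-- Marginalized strategy x^st(x,y) := (x3·y + x4·ỹ)/Δ(x,y). -/
noncomputable def xst (x1 x2 x3 x4 y : ℝ) : ℝ :=
  (x3 * y + x4 * (1 - y)) / Del x1 x2 x3 x4 y

/-- Stationary payoff u^st(x,y). -/
noncomputable def ust (u1 u2 u3 u4 x1 x2 x3 x4 y : ℝ) : ℝ :=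
  xst x1 x2 x3 x4 y * y * u1 + xst x1 x2 x3 x4 y * (1 - y) * u2 +
  (1 - xst x1 x2 x3 x4 y) * y * u3 + (1 - xst x1 x2 x3 x4 y) * (1 - y) * u4

/-- Partial derivative of a function of z = (x1,x2,x3,x4,y) with respect to the j-th
coordinate. -/
noncomputable def pderiv5 (f : (Fin 5 → ℝ) → ℝ) (z : Fin 5 → ℝ) (j : Fin 5) : ℝ :=
  deriv (fun t => f (Function.update z j t)) (z j)

/-- x^st as a function of z = (x1,x2,x3,x4,y). -/
noncomputable def xstZ (z : Fin 5 → ℝ) : ℝ := xst (z 0) (z 1) (z 2) (z 3) (z 4)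

/-- u^st as a function of z = (x1,x2,x3,x4,y). -/
noncomputable def ustZ (u1 u2 u3 u4 : ℝ) (z : Fin 5 → ℝ) : ℝ :=
  ust u1 u2 u3 u4 (z 0) (z 1) (z 2) (z 3) (z 4)

/-- The gradient-ascent vector field: F_i = x_i(1−x_i)·∂u^st/∂x_i for i = 1,…,4 and
F_5 = −y(1−y)·∂u^st/∂y. -/
noncomputable def Fvec (u1 u2 u3 u4 : ℝ) (z : Fin 5 → ℝ) (i : Fin 5) : ℝ :=
  if i = 4 then -(z 4 * (1 - z 4) * pderiv5 (ustZ u1 u2 u3 u4) z 4)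
  else z i * (1 - z i) * pderiv5 (ustZ u1 u2 u3 u4) z i

/-- The Jacobian matrix of the gradient-ascent vector field at z. -/
noncomputable def Jmat (u1 u2 u3 u4 : ℝ) (z : Fin 5 → ℝ) : Matrix (Fin 5) (Fin 5) ℝ :=
  Matrix.of fun i j => pderiv5 (fun w => Fvec u1 u2 u3 u4 w i) z j

namespace S16

lemma hasDerivAt_lin (p q x : ℝ) : HasDerivAt (fun t : ℝ => p * t + q) p x := by
  simpa using ((hasDerivAt_id x).const_mul p).add_const q

lemma hasDerivAt_lindiv (p q r s x : ℝ) (h : r * x + s ≠ 0) :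
    HasDerivAt (fun t : ℝ => (p * t + q) / (r * t + s))
      ((p * (r * x + s) - (p * x + q) * r) / (r * x + s) ^ 2) x := by
  exact (hasDerivAt_lin p q x).div (hasDerivAt_lin r s x) h

noncomputable def Nf (z : Fin 5 → ℝ) : ℝ := z 2 * z 4 + z 3 * (1 - z 4)
noncomputable def Dl (z : Fin 5 → ℝ) : ℝ := Del (z 0) (z 1) (z 2) (z 3) (z 4)
noncomputable def Pd (z : Fin 5 → ℝ) : Fin 5 → ℝ :=
  ![Nf z * z 4 / Dl z ^ 2,
    Nf z * (1 - z 4) / Dl z ^ 2,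
    z 4 * (Dl z - Nf z) / Dl z ^ 2,
    (1 - z 4) * (Dl z - Nf z) / Dl z ^ 2,
    ((z 2 - z 3) * Dl z - Nf z * (z 1 - z 0 + z 2 - z 3)) / Dl z ^ 2]

lemma Dl_eq (z : Fin 5 → ℝ) :
    Dl z = (1 - z 0) * z 4 + (1 - z 1) * (1 - z 4) + z 2 * z 4 + z 3 * (1 - z 4) := rfl

lemma Nf_eq (z : Fin 5 → ℝ) : Nf z = z 2 * z 4 + z 3 * (1 - z 4) := rfl
lemma Pd_0 (w : Fin 5 → ℝ) : Pd w 0 = Nf w * w 4 / Dl w ^ 2 := by simp [Pd]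
lemma Pd_1 (w : Fin 5 → ℝ) : Pd w 1 = Nf w * (1 - w 4) / Dl w ^ 2 := by simp [Pd]
lemma Pd_2 (w : Fin 5 → ℝ) : Pd w 2 = w 4 * (Dl w - Nf w) / Dl w ^ 2 := by simp [Pd]
lemma Pd_3 (w : Fin 5 → ℝ) : Pd w 3 = (1 - w 4) * (Dl w - Nf w) / Dl w ^ 2 := by simp [Pd]
lemma Pd_4 (w : Fin 5 → ℝ) :
    Pd w 4 = ((w 2 - w 3) * Dl w - Nf w * (w 1 - w 0 + w 2 - w 3)) / Dl w ^ 2 := by simp [Pd]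
lemma Nf_upd4 (z : Fin 5 → ℝ) (t : ℝ) :
    Nf (Function.update z 4 t) = z 2 * t + z 3 * (1 - t) := by
  simp [Nf, Function.update_apply]
lemma Dl_upd4 (z : Fin 5 → ℝ) (t : ℝ) :
    Dl (Function.update z 4 t) =
      (1 - z 0) * t + (1 - z 1) * (1 - t) + z 2 * t + z 3 * (1 - t) := by
  simp [Dl, Del, Function.update_apply]

lemma hasDeriv_xst (z : Fin 5 → ℝ) (hz : Dl z ≠ 0) (i : Fin 5) :
    HasDerivAt (fun t => xstZ (Function.update z i t)) (Pd z i) (z i) := by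
  have hDl := Dl_eq z
  fin_cases i
  · show HasDerivAt (fun t => xstZ (Function.update z 0 t)) (Pd z 0) (z 0)
    have h := hasDerivAt_lindiv 0 (z 2 * z 4 + z 3 * (1 - z 4)) (-(z 4))
      (z 4 + ((1 - z 1) * (1 - z 4) + z 2 * z 4 + z 3 * (1 - z 4))) (z 0)
      (by rw [show -(z 4) * z 0 + (z 4 + ((1 - z 1) * (1 - z 4) + z 2 * z 4 + z 3 * (1 - z 4))) = Dl z by rw [hDl]; ring]; exact hz)
    convert h using 2 with t
    · simp [xstZ, xst, Del, Function.update_apply]; ring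
    · simp only [Pd, Nf, Matrix.cons_val_zero]
      rw [hDl]; ring
  · show HasDerivAt (fun t => xstZ (Function.update z 1 t)) (Pd z 1) (z 1)
    have h := hasDerivAt_lindiv 0 (z 2 * z 4 + z 3 * (1 - z 4)) (-(1 - z 4))
      ((1 - z 0) * z 4 + (1 - z 4) + z 2 * z 4 + z 3 * (1 - z 4)) (z 1)
      (by rw [show -(1 - z 4) * z 1 + ((1 - z 0) * z 4 + (1 - z 4) + z 2 * z 4 + z 3 * (1 - z 4)) = Dl z by rw [hDl]; ring]; exact hz)
    convert h using 2 with t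
    · simp [xstZ, xst, Del, Function.update_apply]; ring
    · simp only [Pd_1, Nf]
      rw [hDl]; ring
  · show HasDerivAt (fun t => xstZ (Function.update z 2 t)) (Pd z 2) (z 2)
    have h := hasDerivAt_lindiv (z 4) (z 3 * (1 - z 4)) (z 4)
      ((1 - z 0) * z 4 + (1 - z 1) * (1 - z 4) + z 3 * (1 - z 4)) (z 2)
      (by rw [show z 4 * z 2 + ((1 - z 0) * z 4 + (1 - z 1) * (1 - z 4) + z 3 * (1 - z 4)) = Dl z by rw [hDl]; ring]; exact hz)
    convert h using 2 with t
    · simp [xstZ, xst, Del, Function.update_apply]; ring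
    · show z 4 * (Dl z - Nf z) / Dl z ^ 2 = _
      simp only [Nf]; rw [hDl]; ring
  · show HasDerivAt (fun t => xstZ (Function.update z 3 t)) (Pd z 3) (z 3)
    have h := hasDerivAt_lindiv (1 - z 4) (z 2 * z 4) (1 - z 4)
      ((1 - z 0) * z 4 + (1 - z 1) * (1 - z 4) + z 2 * z 4) (z 3)
      (by rw [show (1 - z 4) * z 3 + ((1 - z 0) * z 4 + (1 - z 1) * (1 - z 4) + z 2 * z 4) = Dl z by rw [hDl]; ring]; exact hz)
    convert h using 2 with t
    · simp [xstZ, xst, Del, Function.update_apply]; ring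
    · show (1 - z 4) * (Dl z - Nf z) / Dl z ^ 2 = _
      simp only [Nf]; rw [hDl]; ring
  · show HasDerivAt (fun t => xstZ (Function.update z 4 t)) (Pd z 4) (z 4)
    have h := hasDerivAt_lindiv (z 2 - z 3) (z 3) (z 1 - z 0 + z 2 - z 3)
      (1 - z 1 + z 3) (z 4)
      (by rw [show (z 1 - z 0 + z 2 - z 3) * z 4 + (1 - z 1 + z 3) = Dl z by rw [hDl]; ring]; exact hz)
    convert h using 2 with t
    · simp [xstZ, xst, Del, Function.update_apply]; ring
    · show ((z 2 - z 3) * Dl z - Nf z * (z 1 - z 0 + z 2 - z 3)) / Dl z ^ 2 = _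
      simp only [Nf]; rw [hDl]; ring

lemma pderiv_xst (z : Fin 5 → ℝ) (hz : Dl z ≠ 0) (i : Fin 5) :
    pderiv5 xstZ z i = Pd z i :=
  (hasDeriv_xst z hz i).deriv

lemma ust_decomp (u1 u2 u3 u4 : ℝ) (w : Fin 5 → ℝ) :
    ustZ u1 u2 u3 u4 w =
      xstZ w * (w 4 * (u1 - u2 - u3 + u4) - (u4 - u2)) + w 4 * u3 + (1 - w 4) * u4 := by
  unfold ustZ ust xstZ; ring

noncomputable def Qd (u1 u2 u3 u4 : ℝ) (z : Fin 5 → ℝ) (i : Fin 5) : ℝ :=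
  Pd z i * (z 4 * (u1 - u2 - u3 + u4) - (u4 - u2)) +
    (if i = 4 then xstZ z * (u1 - u2 - u3 + u4) + u3 - u4 else 0)

lemma hasDeriv_ust (u1 u2 u3 u4 : ℝ) (z : Fin 5 → ℝ) (hz : Dl z ≠ 0) (i : Fin 5) :
    HasDerivAt (fun t => ustZ u1 u2 u3 u4 (Function.update z i t))
      (Qd u1 u2 u3 u4 z i) (z i) := by
  rcases eq_or_ne i 4 with rfl | hi
  · simp only [ust_decomp, Function.update_self]
    have h := ((hasDeriv_xst z hz 4).mul
        (hasDerivAt_lin (u1 - u2 - u3 + u4) (-(u4 - u2)) (z 4))).add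
        (hasDerivAt_lin (u3 - u4) u4 (z 4))
    convert h using 2 with t
    · rfl
    · rfl
    · simp only [Pi.add_apply, Pi.mul_apply]; ring
    · simp only [Qd, if_pos rfl, if_true, eq_self_iff_true, Function.update_eq_self]
      ring
  · simp only [ust_decomp, Function.update_of_ne (Ne.symm hi)]
    have h := (((hasDeriv_xst z hz i).mul_const
        (z 4 * (u1 - u2 - u3 + u4) - (u4 - u2))).add_const (z 4 * u3)).add_const
        ((1 - z 4) * u4)
    convert h using 1
    · rfl
    · rfl
    simp only [Qd, if_neg hi]
    ring

lemma pderiv_ust (u1 u2 u3 u4 : ℝ) (z : Fin 5 → ℝ) (hz : Dl z ≠ 0) (i : Fin 5) :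
    pderiv5 (ustZ u1 u2 u3 u4) z i = Qd u1 u2 u3 u4 z i :=
  (hasDeriv_ust u1 u2 u3 u4 z hz i).deriv

lemma Fvec_eq (u1 u2 u3 u4 : ℝ) (w : Fin 5 → ℝ) (hw : Dl w ≠ 0) (i : Fin 5) :
    Fvec u1 u2 u3 u4 w i =
      if i = 4 then -(w 4 * (1 - w 4) * Qd u1 u2 u3 u4 w 4)
      else w i * (1 - w i) * Qd u1 u2 u3 u4 w i := by
  unfold Fvec
  rcases eq_or_ne i 4 with rfl | h
  · simp [pderiv_ust u1 u2 u3 u4 w hw]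
  · simp [h, pderiv_ust u1 u2 u3 u4 w hw]

lemma cont_Dl (z : Fin 5 → ℝ) (j : Fin 5) :
    Continuous fun t : ℝ => Dl (Function.update z j t) := by
  have hk : ∀ k : Fin 5, Continuous fun t : ℝ => Function.update z j t k := by
    intro k
    rcases eq_or_ne k j with rfl | h
    · simpa [Function.update_self] using continuous_id'
    · simpa [Function.update_of_ne h] using continuous_const
  exact (((continuous_const.sub (hk 0)).mul (hk 4)).add
      ((continuous_const.sub (hk 1)).mul (continuous_const.sub (hk 4)))).add
      (((hk 2).mul (hk 4))) |>.add ((hk 3).mul (continuous_const.sub (hk 4)))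

lemma ev_ne (z : Fin 5 → ℝ) (hz : Dl z ≠ 0) (j : Fin 5) :
    ∀ᶠ t in nhds (z j), Dl (Function.update z j t) ≠ 0 := by
  have h := (cont_Dl z j).continuousAt (x := z j)
  exact h.eventually_ne (by simpa [Function.update_eq_self] using hz)

section entries
variable (u1 u2 u3 u4 : ℝ) (z : Fin 5 → ℝ)

lemma entry_E1 (hz : Dl z ≠ 0)
    (hL : z 4 * (u1 - u2 - u3 + u4) - (u4 - u2) = 0)
    (i j : Fin 5) (hi : i ≠ 4) (hj : j ≠ 4) :
    pderiv5 (fun w => Fvec u1 u2 u3 u4 w i) z j = 0 := by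
  unfold pderiv5
  have hev : (fun t => Fvec u1 u2 u3 u4 (Function.update z j t) i)
      =ᶠ[nhds (z j)] (fun _ => (0 : ℝ)) := by
    refine (ev_ne z hz j).mono (fun t ht => ?_)
    show Fvec u1 u2 u3 u4 (Function.update z j t) i = 0
    rw [Fvec_eq u1 u2 u3 u4 _ ht, if_neg hi]
    simp only [Qd, if_neg hi, Function.update_of_ne (Ne.symm hj), hL, mul_zero, add_zero]
  rw [hev.deriv_eq, deriv_const]

lemma xstZ_eq (z : Fin 5 → ℝ) : xstZ z = Nf z / Dl z := rfl

lemma entry_E3 (hz : Dl z ≠ 0)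
    (hL : z 4 * (u1 - u2 - u3 + u4) - (u4 - u2) = 0)
    (j : Fin 5) (hj : j ≠ 4) :
    pderiv5 (fun w => Fvec u1 u2 u3 u4 w 4) z j =
      -(z 4 * (1 - z 4) * (u1 - u2 - u3 + u4) * Pd z j) := by
  unfold pderiv5
  have hev : (fun t => Fvec u1 u2 u3 u4 (Function.update z j t) 4)
      =ᶠ[nhds (z j)] (fun t => -(z 4 * (1 - z 4) *
        (xstZ (Function.update z j t) * (u1 - u2 - u3 + u4) + u3 - u4))) := by
    refine (ev_ne z hz j).mono (fun t ht => ?_)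
    show Fvec u1 u2 u3 u4 (Function.update z j t) 4 = _
    rw [Fvec_eq u1 u2 u3 u4 _ ht, if_pos rfl]
    simp only [Qd, if_pos rfl, if_true, eq_self_iff_true,
      Function.update_of_ne (Ne.symm hj), hL, mul_zero, zero_add]
  rw [hev.deriv_eq]
  have h := (((((hasDeriv_xst z hz j).mul_const (u1 - u2 - u3 + u4)).add_const
      u3).sub_const u4).const_mul (z 4 * (1 - z 4))).neg
  exact h.deriv.trans (by ring)

lemma entry_E2 (hz : Dl z ≠ 0)
    (hL : z 4 * (u1 - u2 - u3 + u4) - (u4 - u2) = 0)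
    (i : Fin 5) (hi : i ≠ 4) :
    pderiv5 (fun w => Fvec u1 u2 u3 u4 w i) z 4 =
      z i * (1 - z i) * (u1 - u2 - u3 + u4) * Pd z i := by
  have hs : (z 1 - z 0 + z 2 - z 3) * z 4 + (1 - z 1 + z 3) = Dl z := by rw [Dl_eq]; ring
  have hne : (z 1 - z 0 + z 2 - z 3) * z 4 + (1 - z 1 + z 3) ≠ 0 := by rw [hs]; exact hz
  have hne2 : ((z 1 - z 0 + z 2 - z 3) * z 4 + (1 - z 1 + z 3)) ^ 2 ≠ 0 := pow_ne_zero 2 hne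
  have hc : u4 - u2 = z 4 * (u1 - u2 - u3 + u4) := by linarith
  fin_cases i
  · show pderiv5 (fun w => Fvec u1 u2 u3 u4 w 0) z 4 =
      z 0 * (1 - z 0) * (u1 - u2 - u3 + u4) * Pd z 0
    unfold pderiv5
    have hev : (fun t => Fvec u1 u2 u3 u4 (Function.update z 4 t) 0) =ᶠ[nhds (z 4)]
        (fun t => z 0 * (1 - z 0) * ((((z 2 - z 3) * t + z 3) * t /
          ((z 1 - z 0 + z 2 - z 3) * t + (1 - z 1 + z 3)) ^ 2) *
          ((u1 - u2 - u3 + u4) * t + -(u4 - u2)))) := by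
      refine (ev_ne z hz 4).mono (fun t ht => ?_)
      show Fvec u1 u2 u3 u4 (Function.update z 4 t) 0 = _
      rw [Fvec_eq u1 u2 u3 u4 _ ht, if_neg (by decide : (0 : Fin 5) ≠ 4)]
      simp only [Qd]
      rw [if_neg (by decide : (0 : Fin 5) ≠ 4), add_zero, Pd_0, Nf_upd4, Dl_upd4,
        Function.update_self, Function.update_of_ne (by decide : (0 : Fin 5) ≠ 4)]
      ring
    rw [hev.deriv_eq]
    have h := ((((hasDerivAt_lin (z 2 - z 3) (z 3) (z 4)).mul (hasDerivAt_id (z 4))).div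
      ((hasDerivAt_lin (z 1 - z 0 + z 2 - z 3) (1 - z 1 + z 3) (z 4)).pow 2) hne2).mul
      (hasDerivAt_lin (u1 - u2 - u3 + u4) (-(u4 - u2)) (z 4))).const_mul (z 0 * (1 - z 0))
    refine h.deriv.trans ?_
    rw [Pd_0, Nf_eq, Dl_eq, hc]
    simp only [id_eq, Pi.mul_apply, Pi.div_apply, Pi.pow_apply, Pi.add_apply, Pi.neg_apply]
    ring
  · show pderiv5 (fun w => Fvec u1 u2 u3 u4 w 1) z 4 =
      z 1 * (1 - z 1) * (u1 - u2 - u3 + u4) * Pd z 1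
    unfold pderiv5
    have hev : (fun t => Fvec u1 u2 u3 u4 (Function.update z 4 t) 1) =ᶠ[nhds (z 4)]
        (fun t => z 1 * (1 - z 1) * ((((z 2 - z 3) * t + z 3) * ((-1) * t + 1) /
          ((z 1 - z 0 + z 2 - z 3) * t + (1 - z 1 + z 3)) ^ 2) *
          ((u1 - u2 - u3 + u4) * t + -(u4 - u2)))) := by
      refine (ev_ne z hz 4).mono (fun t ht => ?_)
      show Fvec u1 u2 u3 u4 (Function.update z 4 t) 1 = _
      rw [Fvec_eq u1 u2 u3 u4 _ ht, if_neg (by decide : (1 : Fin 5) ≠ 4)]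
      simp only [Qd]
      rw [if_neg (by decide : (1 : Fin 5) ≠ 4), add_zero, Pd_1, Nf_upd4, Dl_upd4,
        Function.update_self, Function.update_of_ne (by decide : (1 : Fin 5) ≠ 4)]
      ring
    rw [hev.deriv_eq]
    have h := ((((hasDerivAt_lin (z 2 - z 3) (z 3) (z 4)).mul (hasDerivAt_lin (-1) 1 (z 4))).div
      ((hasDerivAt_lin (z 1 - z 0 + z 2 - z 3) (1 - z 1 + z 3) (z 4)).pow 2) hne2).mul
      (hasDerivAt_lin (u1 - u2 - u3 + u4) (-(u4 - u2)) (z 4))).const_mul (z 1 * (1 - z 1))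
    refine h.deriv.trans ?_
    rw [Pd_1, Nf_eq, Dl_eq, hc]
    simp only [id_eq, Pi.mul_apply, Pi.div_apply, Pi.pow_apply, Pi.add_apply, Pi.neg_apply]
    ring
  · show pderiv5 (fun w => Fvec u1 u2 u3 u4 w 2) z 4 =
      z 2 * (1 - z 2) * (u1 - u2 - u3 + u4) * Pd z 2
    unfold pderiv5
    have hev : (fun t => Fvec u1 u2 u3 u4 (Function.update z 4 t) 2) =ᶠ[nhds (z 4)]
        (fun t => z 2 * (1 - z 2) * ((((z 1 - z 0) * t + (1 - z 1)) * t /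
          ((z 1 - z 0 + z 2 - z 3) * t + (1 - z 1 + z 3)) ^ 2) *
          ((u1 - u2 - u3 + u4) * t + -(u4 - u2)))) := by
      refine (ev_ne z hz 4).mono (fun t ht => ?_)
      show Fvec u1 u2 u3 u4 (Function.update z 4 t) 2 = _
      rw [Fvec_eq u1 u2 u3 u4 _ ht, if_neg (by decide : (2 : Fin 5) ≠ 4)]
      simp only [Qd]
      rw [if_neg (by decide : (2 : Fin 5) ≠ 4), add_zero, Pd_2, Nf_upd4, Dl_upd4,
        Function.update_self, Function.update_of_ne (by decide : (2 : Fin 5) ≠ 4)]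
      ring
    rw [hev.deriv_eq]
    have h := ((((hasDerivAt_lin (z 1 - z 0) (1 - z 1) (z 4)).mul (hasDerivAt_id (z 4))).div
      ((hasDerivAt_lin (z 1 - z 0 + z 2 - z 3) (1 - z 1 + z 3) (z 4)).pow 2) hne2).mul
      (hasDerivAt_lin (u1 - u2 - u3 + u4) (-(u4 - u2)) (z 4))).const_mul (z 2 * (1 - z 2))
    refine h.deriv.trans ?_
    rw [Pd_2, Nf_eq, Dl_eq, hc]
    simp only [id_eq, Pi.mul_apply, Pi.div_apply, Pi.pow_apply, Pi.add_apply, Pi.neg_apply]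
    ring
  · show pderiv5 (fun w => Fvec u1 u2 u3 u4 w 3) z 4 =
      z 3 * (1 - z 3) * (u1 - u2 - u3 + u4) * Pd z 3
    unfold pderiv5
    have hev : (fun t => Fvec u1 u2 u3 u4 (Function.update z 4 t) 3) =ᶠ[nhds (z 4)]
        (fun t => z 3 * (1 - z 3) * ((((z 1 - z 0) * t + (1 - z 1)) * ((-1) * t + 1) /
          ((z 1 - z 0 + z 2 - z 3) * t + (1 - z 1 + z 3)) ^ 2) *
          ((u1 - u2 - u3 + u4) * t + -(u4 - u2)))) := by
      refine (ev_ne z hz 4).mono (fun t ht => ?_)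
      show Fvec u1 u2 u3 u4 (Function.update z 4 t) 3 = _
      rw [Fvec_eq u1 u2 u3 u4 _ ht, if_neg (by decide : (3 : Fin 5) ≠ 4)]
      simp only [Qd]
      rw [if_neg (by decide : (3 : Fin 5) ≠ 4), add_zero, Pd_3, Nf_upd4, Dl_upd4,
        Function.update_self, Function.update_of_ne (by decide : (3 : Fin 5) ≠ 4)]
      ring
    rw [hev.deriv_eq]
    have h := ((((hasDerivAt_lin (z 1 - z 0) (1 - z 1) (z 4)).mul (hasDerivAt_lin (-1) 1 (z 4))).div
      ((hasDerivAt_lin (z 1 - z 0 + z 2 - z 3) (1 - z 1 + z 3) (z 4)).pow 2) hne2).mul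
      (hasDerivAt_lin (u1 - u2 - u3 + u4) (-(u4 - u2)) (z 4))).const_mul (z 3 * (1 - z 3))
    refine h.deriv.trans ?_
    rw [Pd_3, Nf_eq, Dl_eq, hc]
    simp only [id_eq, Pi.mul_apply, Pi.div_apply, Pi.pow_apply, Pi.add_apply, Pi.neg_apply]
    ring
  · simp at hi

lemma entry_E4 (hz : Dl z ≠ 0)
    (hL : z 4 * (u1 - u2 - u3 + u4) - (u4 - u2) = 0)
    (hX : xstZ z * (u1 - u2 - u3 + u4) + u3 - u4 = 0) :
    pderiv5 (fun w => Fvec u1 u2 u3 u4 w 4) z 4 =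
      -(2 * z 4 * (1 - z 4) * (u1 - u2 - u3 + u4) * Pd z 4) := by
  have hs : (z 1 - z 0 + z 2 - z 3) * z 4 + (1 - z 1 + z 3) = Dl z := by rw [Dl_eq]; ring
  have hne : (z 1 - z 0 + z 2 - z 3) * z 4 + (1 - z 1 + z 3) ≠ 0 := by rw [hs]; exact hz
  have hne2 : ((z 1 - z 0 + z 2 - z 3) * z 4 + (1 - z 1 + z 3)) ^ 2 ≠ 0 := pow_ne_zero 2 hne
  have hc : u4 - u2 = z 4 * (u1 - u2 - u3 + u4) := by linarith
  have hu : u3 - u4 = -((z 2 * z 4 + z 3 * (1 - z 4)) /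
      ((1 - z 0) * z 4 + (1 - z 1) * (1 - z 4) + z 2 * z 4 + z 3 * (1 - z 4)) *
      (u1 - u2 - u3 + u4)) := by
    have h := hX
    rw [xstZ_eq, Nf_eq, Dl_eq] at h
    linarith
  unfold pderiv5
  have hev : (fun t => Fvec u1 u2 u3 u4 (Function.update z 4 t) 4) =ᶠ[nhds (z 4)]
      (fun t => -((t * ((-1) * t + 1)) *
        ((((z 2 - z 3) * (1 - z 1 + z 3) - z 3 * (z 1 - z 0 + z 2 - z 3)) /
            ((z 1 - z 0 + z 2 - z 3) * t + (1 - z 1 + z 3)) ^ 2) *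
          ((u1 - u2 - u3 + u4) * t + -(u4 - u2)) +
         (((z 2 - z 3) * t + z 3) / ((z 1 - z 0 + z 2 - z 3) * t + (1 - z 1 + z 3))) *
          (u1 - u2 - u3 + u4) +
         -((z 2 * z 4 + z 3 * (1 - z 4)) /
            ((1 - z 0) * z 4 + (1 - z 1) * (1 - z 4) + z 2 * z 4 + z 3 * (1 - z 4)) *
            (u1 - u2 - u3 + u4))))) := by
    refine (ev_ne z hz 4).mono (fun t ht => ?_)
    show Fvec u1 u2 u3 u4 (Function.update z 4 t) 4 = _
    rw [Fvec_eq u1 u2 u3 u4 _ ht, if_pos rfl]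
    simp only [Qd]
    simp only [eq_self_iff_true, if_true, ite_true]
    rw [Pd_4, xstZ_eq, Nf_upd4, Dl_upd4, Function.update_self,
      Function.update_of_ne (by decide : (0 : Fin 5) ≠ 4),
      Function.update_of_ne (by decide : (1 : Fin 5) ≠ 4),
      Function.update_of_ne (by decide : (2 : Fin 5) ≠ 4),
      Function.update_of_ne (by decide : (3 : Fin 5) ≠ 4)]
    linear_combination (-(t * ((-1) * t + 1))) * hu
  rw [hev.deriv_eq]
  have hP4 := (hasDerivAt_const (z 4)
      ((z 2 - z 3) * (1 - z 1 + z 3) - z 3 * (z 1 - z 0 + z 2 - z 3))).div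
      ((hasDerivAt_lin (z 1 - z 0 + z 2 - z 3) (1 - z 1 + z 3) (z 4)).pow 2) hne2
  have hxst4 := hasDerivAt_lindiv (z 2 - z 3) (z 3) (z 1 - z 0 + z 2 - z 3)
      (1 - z 1 + z 3) (z 4) hne
  have hB := ((hP4.mul (hasDerivAt_lin (u1 - u2 - u3 + u4) (-(u4 - u2)) (z 4))).add
      (hxst4.mul_const (u1 - u2 - u3 + u4))).add_const
      (-((z 2 * z 4 + z 3 * (1 - z 4)) /
        ((1 - z 0) * z 4 + (1 - z 1) * (1 - z 4) + z 2 * z 4 + z 3 * (1 - z 4)) *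
        (u1 - u2 - u3 + u4)))
  have hA := (hasDerivAt_id (z 4)).mul (hasDerivAt_lin (-1) 1 (z 4))
  have h := (hA.mul hB).neg
  refine h.deriv.trans ?_
  rw [Pd_4, Nf_eq, Dl_eq, hc]
  simp only [id_eq, Pi.mul_apply, Pi.div_apply, Pi.pow_apply, Pi.add_apply, Pi.neg_apply]
  ring

end entries
end S16

/-- entries of the Jacobian of the gradient-ascent field at an
equilibrium point. -/
theorem stmt16 (u1 u2 u3 u4 : ℝ)
    (h12 : u1 > u2) (h13 : u1 > u3) (h42 : u4 > u2) (h43 : u4 > u3)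
    (x1 x2 x3 x4 y : ℝ)
    (h1 : x1 ∈ Set.Ioo (0 : ℝ) 1) (h2 : x2 ∈ Set.Ioo (0 : ℝ) 1)
    (h3 : x3 ∈ Set.Ioo (0 : ℝ) 1) (h4 : x4 ∈ Set.Ioo (0 : ℝ) 1)
    (hy : y ∈ Set.Ioo (0 : ℝ) 1)
    (hxst : xst x1 x2 x3 x4 y = (u4 - u3) / (u1 - u2 - u3 + u4))
    (hyo : y = (u4 - u2) / (u1 - u2 - u3 + u4)) :
    (∀ i j : Fin 5, i ≠ 4 → j ≠ 4 → Jmat u1 u2 u3 u4 ![x1, x2, x3, x4, y] i j = 0) ∧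
    (∀ i : Fin 5, i ≠ 4 →
      Jmat u1 u2 u3 u4 ![x1, x2, x3, x4, y] i 4 =
        ![x1, x2, x3, x4, y] i * (1 - ![x1, x2, x3, x4, y] i) * (u1 - u2 - u3 + u4) *
          pderiv5 xstZ ![x1, x2, x3, x4, y] i ∧
      0 < Jmat u1 u2 u3 u4 ![x1, x2, x3, x4, y] i 4) ∧
    (∀ j : Fin 5, j ≠ 4 →
      Jmat u1 u2 u3 u4 ![x1, x2, x3, x4, y] 4 j =
        -(y * (1 - y) * (u1 - u2 - u3 + u4) * pderiv5 xstZ ![x1, x2, x3, x4, y] j) ∧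
      Jmat u1 u2 u3 u4 ![x1, x2, x3, x4, y] 4 j < 0) ∧
    Jmat u1 u2 u3 u4 ![x1, x2, x3, x4, y] 4 4 =
      -(2 * y * (1 - y) * (u1 - u2 - u3 + u4) * pderiv5 xstZ ![x1, x2, x3, x4, y] 4) := by
  obtain ⟨hx10, hx11⟩ := h1
  obtain ⟨hx20, hx21⟩ := h2
  obtain ⟨hx30, hx31⟩ := h3
  obtain ⟨hx40, hx41⟩ := h4
  obtain ⟨hy0, hy1⟩ := hy
  have hD : 0 < u1 - u2 - u3 + u4 := by linarith
  set z : Fin 5 → ℝ := ![x1, x2, x3, x4, y] with hzdef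
  have e0 : z 0 = x1 := by rw [hzdef]; simp
  have e1 : z 1 = x2 := by rw [hzdef]; simp
  have e2 : z 2 = x3 := by rw [hzdef]; simp
  have e3 : z 3 = x4 := by rw [hzdef]; simp
  have e4 : z 4 = y := by rw [hzdef]; simp
  have hDl : S16.Dl z = Del x1 x2 x3 x4 y := by
    unfold S16.Dl; rw [e0, e1, e2, e3, e4]
  have hDlpos : 0 < S16.Dl z := by
    rw [hDl]; unfold Del
    have t1 : 0 < (1 - x1) * y := mul_pos (by linarith) hy0
    have t2 : 0 < (1 - x2) * (1 - y) := mul_pos (by linarith) (by linarith)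
    have t3 : 0 < x3 * y := mul_pos hx30 hy0
    have t4 : 0 < x4 * (1 - y) := mul_pos hx40 (by linarith)
    linarith
  have hz : S16.Dl z ≠ 0 := ne_of_gt hDlpos
  have hL : z 4 * (u1 - u2 - u3 + u4) - (u4 - u2) = 0 := by
    rw [e4, hyo, div_mul_cancel₀ _ hD.ne']; ring
  have hxstz : xstZ z = xst x1 x2 x3 x4 y := by
    unfold xstZ; rw [e0, e1, e2, e3, e4]
  have hX : xstZ z * (u1 - u2 - u3 + u4) + u3 - u4 = 0 := by
    rw [hxstz, hxst, div_mul_cancel₀ _ hD.ne']; ring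
  have hP : ∀ i, pderiv5 xstZ z i = S16.Pd z i := S16.pderiv_xst z hz
  have hNfpos : 0 < S16.Nf z := by
    unfold S16.Nf; rw [e2, e3, e4]
    have t3 : 0 < x3 * y := mul_pos hx30 hy0
    have t4 : 0 < x4 * (1 - y) := mul_pos hx40 (by linarith)
    linarith
  have hDNpos : 0 < S16.Dl z - S16.Nf z := by
    rw [hDl]; unfold Del S16.Nf; rw [e2, e3, e4]
    have t1 : 0 < (1 - x1) * y := mul_pos (by linarith) hy0
    have t2 : 0 < (1 - x2) * (1 - y) := mul_pos (by linarith) (by linarith)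
    linarith
  have hy4 : 0 < z 4 := by rw [e4]; exact hy0
  have hy4' : 0 < 1 - z 4 := by rw [e4]; linarith
  have hPdpos : ∀ i : Fin 5, i ≠ 4 → 0 < S16.Pd z i := by
    intro i hi
    fin_cases i
    · show 0 < S16.Pd z 0
      rw [S16.Pd_0]; exact div_pos (mul_pos hNfpos hy4) (pow_pos hDlpos 2)
    · show 0 < S16.Pd z 1
      rw [S16.Pd_1]; exact div_pos (mul_pos hNfpos hy4') (pow_pos hDlpos 2)
    · show 0 < S16.Pd z 2
      rw [S16.Pd_2]; exact div_pos (mul_pos hy4 hDNpos) (pow_pos hDlpos 2)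
    · show 0 < S16.Pd z 3
      rw [S16.Pd_3]; exact div_pos (mul_pos hy4' hDNpos) (pow_pos hDlpos 2)
    · simp at hi
  have hcoord : ∀ i : Fin 5, i ≠ 4 → 0 < z i * (1 - z i) := by
    intro i hi
    fin_cases i
    · show 0 < z 0 * (1 - z 0); rw [e0]; exact mul_pos hx10 (by linarith)
    · show 0 < z 1 * (1 - z 1); rw [e1]; exact mul_pos hx20 (by linarith)
    · show 0 < z 2 * (1 - z 2); rw [e2]; exact mul_pos hx30 (by linarith)
    · show 0 < z 3 * (1 - z 3); rw [e3]; exact mul_pos hx40 (by linarith)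
    · simp at hi
  refine ⟨?_, ?_, ?_, ?_⟩
  · intro i j hi hj
    show pderiv5 (fun w => Fvec u1 u2 u3 u4 w i) z j = 0
    exact S16.entry_E1 u1 u2 u3 u4 z hz hL i j hi hj
  · intro i hi
    constructor
    · show pderiv5 (fun w => Fvec u1 u2 u3 u4 w i) z 4 =
        z i * (1 - z i) * (u1 - u2 - u3 + u4) * pderiv5 xstZ z i
      rw [hP i]
      exact S16.entry_E2 u1 u2 u3 u4 z hz hL i hi
    · show 0 < pderiv5 (fun w => Fvec u1 u2 u3 u4 w i) z 4
      rw [S16.entry_E2 u1 u2 u3 u4 z hz hL i hi]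
      exact mul_pos (mul_pos (hcoord i hi) hD) (hPdpos i hi)
  · intro j hj
    constructor
    · show pderiv5 (fun w => Fvec u1 u2 u3 u4 w 4) z j =
        -(y * (1 - y) * (u1 - u2 - u3 + u4) * pderiv5 xstZ z j)
      rw [hP j, ← e4]
      exact S16.entry_E3 u1 u2 u3 u4 z hz hL j hj
    · show pderiv5 (fun w => Fvec u1 u2 u3 u4 w 4) z j < 0
      rw [S16.entry_E3 u1 u2 u3 u4 z hz hL j hj]
      have hpos : 0 < z 4 * (1 - z 4) * (u1 - u2 - u3 + u4) * S16.Pd z j :=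
        mul_pos (mul_pos (mul_pos hy4 hy4') hD) (hPdpos j hj)
      linarith
  · show pderiv5 (fun w => Fvec u1 u2 u3 u4 w 4) z 4 =
      -(2 * y * (1 - y) * (u1 - u2 - u3 + u4) * pderiv5 xstZ z 4)
    rw [hP 4, ← e4]
    exact S16.entry_E4 u1 u2 u3 u4 z hz hL hX
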